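/- TC(S¹) = 2: the circle admits a cover of S¹ × S¹ by two open sets each with a continuous motion planning, and no continuous motion planning exists on all of S¹ × S¹. -/

import Mathlib

open Set unitInterval

/-- `U ⊆ X × X` admits a continuous motion planning rule: a continuous section over `U`
of the path fibration `π : PX → X × X`, `π(γ) = (γ(0), γ(1))`, where `PX = C(I, X)`
carries the compact-open topology. -/
def HasMotionPlanner (X : Type*) [TopologicalSpace X] (U : Set (X × X)) : Prop :=
  ∃ s : C(U, C(I, X)), ∀ p : U, (s p) 0 = (p : X × X).1 ∧ (s p) 1 = (p : X × X).2

/-- The topological complexity `TC(X)`: the minimal number `k` such that `X × X` can be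
covered by `k` open subsets, each admitting a continuous motion planning rule; `∞` (`⊤`)
if no such `k` exists. -/
noncomputable def topologicalComplexity (X : Type*) [TopologicalSpace X] : ℕ∞ :=
  sInf {k : ℕ∞ | ∃ n : ℕ, k = n ∧ ∃ U : Fin n → Set (X × X),
    (∀ i, IsOpen (U i)) ∧ (⋃ i, U i) = univ ∧ ∀ i, HasMotionPlanner X (U i)}



lemma mem_slitPlane_of_abs_one {z : ℂ} (h1 : ‖z‖ = 1) (h2 : z ≠ -1) :
    z ∈ Complex.slitPlane := by
  rw [Complex.mem_slitPlane_iff]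
  by_cases him : z.im = 0
  · left
    have hn : z.re * z.re + z.im * z.im = 1 := by
      have h := Complex.sq_norm z
      rw [h1, Complex.normSq_apply] at h
      linarith [h]
    rw [him] at hn
    have : z.re = 1 ∨ z.re = -1 := mul_self_eq_one_iff.mp (by linarith)
    rcases this with h | h
    · rw [h]; norm_num
    · exfalso; exact h2 (by apply Complex.ext <;> simp [h, him])
  · right; exact him

lemma continuousAt_arg_comp {α : Type*} [TopologicalSpace α] {f : α → ℂ} {a : α}
    (hf : Continuous f) (h1 : ∀ x, ‖f x‖ = 1) (h2 : f a ≠ -1) :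
    ContinuousAt (fun x => Complex.arg (f x)) a :=
  (Complex.continuousAt_arg (mem_slitPlane_of_abs_one (h1 a) h2)).comp hf.continuousAt

lemma circle_exp_sum (m : ℕ) (f : ℕ → ℝ) :
    Circle.exp (∑ k ∈ Finset.range m, f k) = ∏ k ∈ Finset.range m, Circle.exp (f k) := by
  induction m with
  | zero => simp
  | succ m ih => rw [Finset.sum_range_succ, Finset.prod_range_succ, Circle.exp_add, ih]


lemma hasMotionPlanner_of_phase (U : Set (Circle × Circle)) (φ : C(U, ℝ))
    (hφ : ∀ p : U, (p : Circle × Circle).1 * Circle.exp (φ p) = (p : Circle × Circle).2) :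
    HasMotionPlanner Circle U := by
  have hc : Continuous fun q : U × I =>
      (q.1 : Circle × Circle).1 * Circle.exp ((q.2 : ℝ) * φ q.1) := by
    apply Continuous.mul
    · exact (continuous_subtype_val.comp continuous_fst).fst
    · exact Circle.exp.continuous.comp
        (((continuous_subtype_val.comp continuous_snd)).mul (φ.continuous.comp continuous_fst))
  refine ⟨ContinuousMap.curry ⟨_, hc⟩, fun p => ?_⟩
  constructor
  · simp
  · simpa using hφ p

def Uone : Set (Circle × Circle) := {p | (p.2 : ℂ) ≠ -(p.1 : ℂ)}
def Utwo : Set (Circle × Circle) := {p | (p.2 : ℂ) ≠ (p.1 : ℂ)}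

lemma isOpen_Uone : IsOpen Uone :=
  isOpen_ne_fun (continuous_subtype_val.comp continuous_snd)
    ((continuous_subtype_val.comp continuous_fst).neg)

lemma isOpen_Utwo : IsOpen Utwo :=
  isOpen_ne_fun (continuous_subtype_val.comp continuous_snd)
    (continuous_subtype_val.comp continuous_fst)

lemma Uone_union_Utwo : Uone ∪ Utwo = univ := by
  ext p
  simp only [Uone, Utwo, mem_union, mem_setOf_eq, mem_univ, iff_true]
  by_contra h
  push_neg at h
  obtain ⟨h1, h2⟩ := h
  have : (p.1 : ℂ) = 0 := by
    have := h1.symm.trans h2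
    linear_combination (-1/2 : ℂ) * this
  exact p.1.coe_ne_zero this

lemma planner_Uone : HasMotionPlanner Circle Uone := by
  have hcont : Continuous fun p : Uone =>
      Complex.arg (((p : Circle × Circle).2 / (p : Circle × Circle).1 : Circle) : ℂ) := by
    rw [continuous_iff_continuousAt]
    intro p
    apply continuousAt_arg_comp
    · have h1 : Continuous fun p : Uone => ((p : Circle × Circle).2 / (p : Circle × Circle).1 : Circle) := by fun_prop
      exact continuous_subtype_val.comp h1
    · intro x; simp [Circle.norm_coe]
    · intro h
      apply p.2
      have hx := (p : Circle × Circle).1.coe_ne_zero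
      rw [Circle.coe_div, div_eq_iff hx] at h
      rw [h]; ring
  refine hasMotionPlanner_of_phase _ ⟨_, hcont⟩ fun p => ?_
  simp only [ContinuousMap.coe_mk]
  rw [Circle.exp_arg]
  ext
  push_cast
  field_simp

lemma planner_Utwo : HasMotionPlanner Circle Utwo := by
  have habs : ∀ p : Utwo,
      ‖(-((p : Circle × Circle).2 / (p : Circle × Circle).1 : ℂ))‖ = 1 := by
    intro p; simp [Circle.norm_coe]
  have hne : ∀ p : Utwo,
      (-((p : Circle × Circle).2 / (p : Circle × Circle).1 : ℂ)) ≠ -1 := by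
    intro p h
    apply p.2
    have hx := (p : Circle × Circle).1.coe_ne_zero
    rw [neg_eq_iff_eq_neg, neg_neg, div_eq_iff hx, one_mul] at h
    exact h
  have hcont : Continuous fun p : Utwo =>
      Complex.arg (-((p : Circle × Circle).2 / (p : Circle × Circle).1 : ℂ)) + Real.pi := by
    apply Continuous.add _ continuous_const
    rw [continuous_iff_continuousAt]
    intro p
    apply continuousAt_arg_comp _ habs (hne p)
    have h1 : Continuous fun p : Utwo => (((p : Circle × Circle).2 : ℂ) / ((p : Circle × Circle).1 : ℂ)) := by
      apply Continuous.div (by fun_prop) (by fun_prop)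
      exact fun p => (↑p : Circle × Circle).1.coe_ne_zero
    exact h1.neg
  refine hasMotionPlanner_of_phase _ ⟨_, hcont⟩ fun p => ?_
  simp only [ContinuousMap.coe_mk]
  set x := (p : Circle × Circle).1
  set y := (p : Circle × Circle).2
  set w := -((y : ℂ) / (x : ℂ))
  have hw : Complex.exp (Complex.arg w * Complex.I) = w := by
    have := Complex.norm_mul_exp_arg_mul_I w
    rwa [habs p, Complex.ofReal_one, one_mul] at this
  ext
  rw [Circle.coe_mul, Circle.coe_exp]
  push_cast
  rw [add_mul, Complex.exp_add, hw, Complex.exp_pi_mul_I]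
  have hx := x.coe_ne_zero
  field_simp [w]
  rw [show w = -((y:ℂ)/(x:ℂ)) from rfl]; field_simp
lemma no_planner : ¬ HasMotionPlanner Circle (univ : Set (Circle × Circle)) := by
  rintro ⟨s, hs⟩
  -- the path family σ x := s (1, x), uncurried
  let e : C(Circle, (univ : Set (Circle × Circle))) :=
    ⟨fun x => ⟨(1, x), mem_univ _⟩, (continuous_const.prodMk continuous_id).subtype_mk _⟩
  let F : C(Circle × I, Circle) := (s.comp e).uncurry
  have hF0 : ∀ x, F (x, 0) = 1 := fun x => (hs (e x)).1
  have hF1 : ∀ x, F (x, 1) = x := fun x => (hs (e x)).2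
  -- uniform continuity
  obtain ⟨δ, hδ, hδ2⟩ := Metric.uniformContinuous_iff.mp
    (CompactSpace.uniformContinuous_of_continuous F.continuous) 2 (by norm_num)
  obtain ⟨n', hn'⟩ := exists_nat_one_div_lt hδ
  set n : ℕ := n' + 1 with hn
  have hnpos : (0:ℝ) < n := by positivity
  -- subdivision points
  set t_ : ℕ → I := fun k => projIcc (0:ℝ) 1 zero_le_one ((k : ℝ) / n) with ht_
  have ht0 : t_ 0 = 0 := by simp [ht_]
  have htn : t_ n = 1 := by
    have h1 : ((n : ℝ) / n) = 1 := div_self hnpos.ne'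
    simp [ht_, h1]
  have key : ∀ (x : Circle) (k : ℕ), dist (F (x, t_ (k + 1))) (F (x, t_ k)) < 2 := by
    intro x k
    apply hδ2
    rw [Prod.dist_eq]
    have h1 : dist (t_ (k+1)) (t_ k) < δ := by
      have hl := (LipschitzWith.projIcc (zero_le_one' ℝ)).dist_le_mul
        (((k:ℝ)+1) / n) ((k:ℝ) / n)
      have h2 : dist (((k:ℝ)+1) / n) ((k:ℝ) / n) = 1 / n := by
        rw [Real.dist_eq, div_sub_div_same]
        rw [show (k:ℝ) + 1 - k = 1 by ring]
        rw [_root_.abs_of_nonneg (by positivity)]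
      calc dist (t_ (k+1)) (t_ k) ≤ 1 * (1 / n) := by
            simpa [ht_, h2] using hl
        _ = 1 / ((n' : ℝ) + 1) := by rw [one_mul, hn]; push_cast; ring_nf
        _ < δ := hn'
    simp only [dist_self]
    exact max_lt hδ h1
  -- the local quotients are never -1
  have zne : ∀ (x : Circle) (k : ℕ),
      ((F (x, t_ (k + 1)) / F (x, t_ k) : Circle) : ℂ) ≠ -1 := by
    intro x k h
    have hb := (F (x, t_ k)).coe_ne_zero
    rw [Circle.coe_div, div_eq_iff hb] at h
    have hd : dist (F (x, t_ (k+1))) (F (x, t_ k)) = 2 := by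
      rw [show dist (F (x, t_ (k+1))) (F (x, t_ k)) = dist (F (x, t_ (k+1)) : ℂ) (F (x, t_ k) : ℂ) from rfl, Complex.dist_eq, h]
      rw [show (-1 : ℂ) * (F (x, t_ k) : ℂ) - (F (x, t_ k) : ℂ)
        = -(2 * (F (x, t_ k) : ℂ)) by ring]
      rw [norm_neg, norm_mul]
      simp [Circle.norm_coe]
    exact absurd hd (key x k).ne
  -- the winding function
  set g : Circle → ℝ := fun x => ∑ k ∈ Finset.range n,
    Complex.arg ((F (x, t_ (k + 1)) / F (x, t_ k) : Circle) : ℂ) with hgdef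
  have hgcont : Continuous g := by
    apply continuous_finset_sum
    intro k _
    rw [continuous_iff_continuousAt]
    intro x
    apply continuousAt_arg_comp
    · have h1 : Continuous fun x : Circle => (F (x, t_ (k + 1)) / F (x, t_ k) : Circle) := by
        apply Continuous.div'
        · exact F.continuous.comp (continuous_id.prodMk continuous_const)
        · exact F.continuous.comp (continuous_id.prodMk continuous_const)
      exact continuous_subtype_val.comp h1
    · intro y; simp [Circle.norm_coe]
    · exact zne x k
  have hexp : ∀ x, Circle.exp (g x) = x := by
    intro x
    rw [hgdef, circle_exp_sum]
    have h1 : ∀ k ∈ Finset.range n,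
        Circle.exp (Complex.arg ((F (x, t_ (k + 1)) / F (x, t_ k) : Circle) : ℂ))
          = F (x, t_ (k + 1)) / F (x, t_ k) := fun k _ => Circle.exp_arg _
    rw [Finset.prod_congr rfl h1, Finset.prod_range_div (fun k => F (x, t_ k)) n]
    rw [ht0, htn, hF0, hF1, div_one]
  -- transfer to ℝ and derive a contradiction
  set K : ℝ → ℝ := fun t => (g (Circle.exp t) - t) / (2 * Real.pi) with hK
  have hKcont : Continuous K := by
    apply Continuous.div_const
    exact (hgcont.comp Circle.exp.continuous).sub continuous_id
  have hKint : ∀ t : ℝ, ∃ m : ℤ, K t = m := by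
    intro t
    obtain ⟨m, hm⟩ := Circle.exp_eq_exp.mp (hexp (Circle.exp t))
    refine ⟨m, ?_⟩
    show (g (Circle.exp t) - t) / (2 * Real.pi) = m
    rw [hm]
    field_simp
    ring
  obtain ⟨m₀, hm₀⟩ := hKint 0
  have hK2π : K (2 * Real.pi) = m₀ - 1 := by
    have h1 : Circle.exp (2 * Real.pi) = Circle.exp 0 := by
      rw [Circle.exp_two_pi, Circle.exp_zero]
    show (g (Circle.exp (2 * Real.pi)) - 2 * Real.pi) / (2 * Real.pi) = (m₀ : ℝ) - 1
    rw [h1]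
    have h0 : (g (Circle.exp 0) - 0) / (2 * Real.pi) = (m₀ : ℝ) := hm₀
    have hπ := Real.pi_pos
    field_simp at h0 ⊢
    linarith
  have hy : (m₀ : ℝ) - 1/2 ∈ Icc (K (2 * Real.pi)) (K 0) := by
    rw [hm₀, hK2π]; constructor <;> linarith
  obtain ⟨t, _, hkt⟩ := intermediate_value_Icc' (by positivity : (0:ℝ) ≤ 2 * Real.pi)
    hKcont.continuousOn hy
  obtain ⟨m, hm⟩ := hKint t
  rw [hm] at hkt
  have h2 : (2 * m : ℤ) = 2 * m₀ - 1 := by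
    have : (2 * m : ℝ) = 2 * m₀ - 1 := by rw [hkt]; ring
    exact_mod_cast this
  omega


/-- `TC(S¹) = 2`: the circle admits a cover of `S¹ × S¹` by two open sets each with a
continuous motion planning, and no continuous motion planning exists on all of `S¹ × S¹`. -/
theorem stmt_9 :
    topologicalComplexity Circle = 2 ∧
    (∃ U₁ U₂ : Set (Circle × Circle), IsOpen U₁ ∧ IsOpen U₂ ∧ U₁ ∪ U₂ = univ ∧
      HasMotionPlanner Circle U₁ ∧ HasMotionPlanner Circle U₂) ∧
    ¬ HasMotionPlanner Circle univ := by
  refine ⟨?_, ⟨Uone, Utwo, isOpen_Uone, isOpen_Utwo, Uone_union_Utwo,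
    planner_Uone, planner_Utwo⟩, no_planner⟩
  have mem2 : (2 : ℕ∞) ∈ {k : ℕ∞ | ∃ n : ℕ, k = n ∧ ∃ U : Fin n → Set (Circle × Circle),
      (∀ i, IsOpen (U i)) ∧ (⋃ i, U i) = univ ∧ ∀ i, HasMotionPlanner Circle (U i)} := by
    refine ⟨2, by norm_cast, ![Uone, Utwo], ?_, ?_, ?_⟩
    · intro i; fin_cases i
      · exact isOpen_Uone
      · exact isOpen_Utwo
    · ext p
      simp only [mem_iUnion, Fin.exists_fin_two, mem_univ, iff_true]
      have := Uone_union_Utwo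
      have hp : p ∈ Uone ∪ Utwo := this ▸ mem_univ p
      simpa using hp
    · intro i; fin_cases i
      · exact planner_Uone
      · exact planner_Utwo
  refine le_antisymm (sInf_le mem2) (le_sInf ?_)
  rintro b ⟨n, rfl, U, hop, hcov, hpl⟩
  have hn : 2 ≤ n := by
    by_contra h
    push_neg at h
    interval_cases n
    · rw [iUnion_of_empty] at hcov
      exact (Set.empty_ne_univ hcov).elim
    · have hU0 : U 0 = univ := by
        apply eq_univ_of_univ_subset
        rw [← hcov]
        exact iUnion_subset fun i => by rw [Subsingleton.elim i 0]
      exact no_planner (hU0 ▸ hpl 0)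
  exact_mod_cast hn
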